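/- Let (X, ρ) be a metric space, Y ⊆ X, and suppose the covering number satisfies log N_X(s, Y, ρ) ≤ c₁ s^{-γ} for all s ∈ (0, s₀), with constants c₁ > 0, γ > 0, s₀ > 0. Let P be a Borel probability measure on X with P(Y) = 1, and define ψ(x,h) = P({y ∈ Y : ρ(x,y) < h}). Then for all δ > 0 and all h ∈ (0, 2s₀), P({x ∈ Y : ψ(x,h) ≤ δ}) ≤ δ · exp(c₁ · 4^γ · h^{-γ}). -/

import Mathlib

open Metric MeasureTheory
open scoped ENNReal

/-- Covering number of `Y` at radius `δ` by open balls with centers anywhere in `X`. -/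
noncomputable def coveringNumber {X : Type*} [MetricSpace X] (Y : Set X) (δ : ℝ) : ℕ∞ :=
  ⨅ (s : Finset X) (_ : Y ⊆ ⋃ c ∈ s, Metric.ball c δ), (s.card : ℕ∞)

/-- Lemma 1 (Lemma `Ltop`): small-ball probability bound under a metric entropy condition. -/
theorem measure_small_ball_le
    {X : Type*} [MetricSpace X] [SecondCountableTopology X] [CompleteSpace X]
    [MeasurableSpace X] [BorelSpace X]
    (Y : Set X) (hYm : MeasurableSet Y)
    (c₁ γ s₀ : ℝ) (hc₁ : 0 < c₁) (hγ : 0 < γ) (hs₀ : 0 < s₀)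
    (hent : ∀ s : ℝ, 0 < s → s < s₀ →
      (coveringNumber Y s : ℝ≥0∞) ≤ ENNReal.ofReal (Real.exp (c₁ * s ^ (-γ))))
    (P : Measure X) [IsProbabilityMeasure P] (hP : P Y = 1)
    (ψ : X → ℝ → ℝ≥0∞) (hψ : ∀ x h, ψ x h = P {y ∈ Y | dist x y < h})
    (δ : ℝ) (hδ : 0 < δ) (h : ℝ) (hh : 0 < h) (hhs : h < 2 * s₀) :
    P {x ∈ Y | ψ x h ≤ ENNReal.ofReal δ} ≤
      ENNReal.ofReal (δ * Real.exp (c₁ * 4 ^ γ * h ^ (-γ))) := by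
  set s : ℝ := h / 4 with hs_def
  have hs : 0 < s := by positivity
  have hss₀ : s < s₀ := by rw [hs_def]; linarith
  have hcov := hent s hs hss₀
  set A := {x ∈ Y | ψ x h ≤ ENNReal.ofReal δ} with hA
  -- the set of achievable cover cardinalities
  have hcovF : ∃ F : Finset X, Y ⊆ ⋃ c ∈ F, Metric.ball c s := by
    by_contra hno
    push_neg at hno
    have htop : coveringNumber Y s = ⊤ := by
      rw [_root_.coveringNumber, iInf_eq_top]
      intro F
      rw [iInf_eq_top]
      intro hF
      exact absurd hF (hno F)
    rw [htop] at hcov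
    simp only [ENat.toENNReal_top, top_le_iff] at hcov
    exact ENNReal.ofReal_ne_top hcov
  have hSne : {n : ℕ | ∃ F : Finset X, (Y ⊆ ⋃ c ∈ F, Metric.ball c s) ∧ F.card = n}.Nonempty := by
    obtain ⟨F, hF⟩ := hcovF
    exact ⟨F.card, Set.mem_setOf.mpr ⟨F, hF, rfl⟩⟩
  set S := {n : ℕ | ∃ F : Finset X, (Y ⊆ ⋃ c ∈ F, Metric.ball c s) ∧ F.card = n} with hS
  obtain ⟨F, hFcov, hFcard⟩ := Nat.sInf_mem hSne
  have hmin : ((sInf S : ℕ) : ℕ∞) ≤ coveringNumber Y s := by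
    rw [_root_.coveringNumber]
    refine le_iInf fun F' => le_iInf fun hF' => ?_
    have hmem : F'.card ∈ S := ⟨F', hF', rfl⟩
    exact_mod_cast Nat.sInf_le hmem
  -- real bound on F.card
  have hcard : (F.card : ℝ) ≤ Real.exp (c₁ * s ^ (-γ)) := by
    have h1 : (((sInf S : ℕ) : ℕ∞) : ℝ≥0∞) ≤ ENNReal.ofReal (Real.exp (c₁ * s ^ (-γ))) :=
      le_trans (ENat.toENNReal_le.mpr hmin) hcov
    have h2 : ((F.card : ℝ≥0∞)) ≤ ENNReal.ofReal (Real.exp (c₁ * s ^ (-γ))) := by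
      rw [hFcard]; simpa using h1
    rw [← ENNReal.ofReal_natCast] at h2
    exact (ENNReal.ofReal_le_ofReal_iff (Real.exp_nonneg _)).mp h2
  -- exponent rewriting
  have hexp : c₁ * s ^ (-γ) = c₁ * 4 ^ γ * h ^ (-γ) := by
    rw [hs_def, Real.div_rpow hh.le (by norm_num : (0:ℝ) ≤ 4)]
    rw [Real.rpow_neg hh.le, Real.rpow_neg (by norm_num : (0:ℝ) ≤ 4)]
    have h4 : (4:ℝ) ^ γ ≠ 0 := by positivity
    have hh' : h ^ γ ≠ 0 := by positivity
    field_simp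
  -- per-ball bound
  have hball : ∀ c : X, P (A ∩ Metric.ball c s) ≤ ENNReal.ofReal δ := by
    intro c
    rcases Set.eq_empty_or_nonempty (A ∩ Metric.ball c s) with he | ⟨x, hxA, hxB⟩
    · simp [he]
    · have hsub : A ∩ Metric.ball c s ⊆ {y ∈ Y | dist x y < h} := by
        rintro y ⟨hyA, hyB⟩
        refine ⟨hyA.1, ?_⟩
        rw [mem_ball] at hxB
        rw [mem_ball, dist_comm] at hyB
        have htri : dist x y < 2 * s := by linarith [dist_triangle x c y]
        rw [hs_def] at htri; linarith
      calc P (A ∩ Metric.ball c s) ≤ P {y ∈ Y | dist x y < h} := measure_mono hsub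
        _ = ψ x h := (hψ x h).symm
        _ ≤ ENNReal.ofReal δ := hxA.2
  -- sum over the cover
  have hAsub : A ⊆ ⋃ c ∈ F, A ∩ Metric.ball c s := by
    intro x hx
    obtain ⟨c, hc, hxc⟩ := Set.mem_iUnion₂.mp (hFcov hx.1)
    exact Set.mem_iUnion₂.mpr ⟨c, hc, hx, hxc⟩
  calc P A ≤ P (⋃ c ∈ F, A ∩ Metric.ball c s) := measure_mono hAsub
    _ ≤ ∑ c ∈ F, P (A ∩ Metric.ball c s) := measure_biUnion_finset_le F _
    _ ≤ ∑ c ∈ F, ENNReal.ofReal δ := Finset.sum_le_sum fun c _ => hball c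
    _ = (F.card : ℝ≥0∞) * ENNReal.ofReal δ := by
        rw [Finset.sum_const, nsmul_eq_mul]
    _ ≤ ENNReal.ofReal (Real.exp (c₁ * s ^ (-γ))) * ENNReal.ofReal δ := by
        gcongr
        rw [← ENNReal.ofReal_natCast]
        exact ENNReal.ofReal_le_ofReal hcard
    _ = ENNReal.ofReal (δ * Real.exp (c₁ * 4 ^ γ * h ^ (-γ))) := by
        rw [← ENNReal.ofReal_mul (Real.exp_nonneg _), hexp, mul_comm]
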